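/- Let R be a discrete valuation ring with uniformizer π and let 𝓡 = ⊕_{m ∈ ℤ^n} 𝓡_m be a ℤ^n-graded R-algebra such that each graded piece 𝓡_m is a finitely generated R-module. If 𝓡/π𝓡 is Noetherian, then 𝓡 satisfies the ascending chain condition on graded ideals. -/

import Mathlib

section AuxGN

variable {R : Type*} [CommRing R] {A : Type*} [Ring A] [Algebra R A]

lemma GNaux.smul_mem_ideal (J : Ideal A) (r : R) {x : A} (hx : x ∈ J) : r • x ∈ J := by
  rw [Algebra.smul_def]
  exact J.mul_mem_left _ hx

/-- The "colon" ideal `{a | r • a ∈ J}`. -/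
def GNaux.colon (J : Ideal A) (r : R) : Ideal A where
  carrier := {a | r • a ∈ J}
  add_mem' {a b} ha hb := by simpa [smul_add] using J.add_mem ha hb
  zero_mem' := by simp
  smul_mem' c a ha := by
    show r • (c • a) ∈ J
    rw [smul_comm]
    exact J.smul_mem c ha

lemma GNaux.mem_colon {J : Ideal A} {r : R} {a : A} : a ∈ GNaux.colon J r ↔ r • a ∈ J := Iff.rfl

lemma GNaux.mem_span_algebraMap {π : R} {x : A} :
    x ∈ Ideal.span {algebraMap R A π} ↔ ∃ y : A, x = π • y := by
  rw [Ideal.span, Submodule.mem_span_singleton]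
  have key : ∀ y : A, y • (algebraMap R A π) = π • y := fun y => by
    rw [smul_eq_mul, Algebra.smul_def]
    exact (Algebra.commutes π y).symm
  constructor
  · rintro ⟨y, rfl⟩
    exact ⟨y, key y⟩
  · rintro ⟨y, rfl⟩
    exact ⟨y, key y⟩

end AuxGN

section Krull

variable {R : Type*} [CommRing R] [IsDomain R] [IsDiscreteValuationRing R]
  {A : Type*} [Ring A] [Algebra R A]

lemma GNaux.krull_finisher (π : R) (hπ : Irreducible π)
    (M : Submodule R A) (hM : M.FG) (T : Ideal A) {a : A} (ha : a ∈ M)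
    (h : ∀ k : ℕ, ∃ b y : A, b ∈ T ∧ b ∈ M ∧ y ∈ M ∧ a = b + π ^ k • y) : a ∈ T := by
  haveI : Module.Finite R ↥M := Module.Finite.iff_fg.mpr hM
  set N : Submodule R ↥M := (T.restrictScalars R).comap M.subtype with hN
  have hmax : (IsLocalRing.maximalIdeal R) ≠ ⊤ := Ideal.IsMaximal.ne_top inferInstance
  have hπm : π ∈ IsLocalRing.maximalIdeal R := by
    rw [IsLocalRing.mem_maximalIdeal]
    exact hπ.not_isUnit
  set x : ↥M ⧸ N := N.mkQ ⟨a, ha⟩ with hxdef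
  have hx : ∀ k : ℕ, x ∈ (IsLocalRing.maximalIdeal R ^ k • ⊤ : Submodule R (↥M ⧸ N)) := by
    intro k
    obtain ⟨b, y, hbT, hbM, hyM, heq⟩ := h k
    have hab : (⟨a, ha⟩ : ↥M) = ⟨b, hbM⟩ + π ^ k • ⟨y, hyM⟩ := by
      ext
      simpa using heq
    have hb0 : N.mkQ ⟨b, hbM⟩ = 0 := (Submodule.Quotient.mk_eq_zero N).mpr hbT
    rw [hxdef, hab, map_add, map_smul, hb0, zero_add]
    exact Submodule.smul_mem_smul (Ideal.pow_mem_pow hπm k) trivial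
  -- transfer to a same-universe model to apply Krull's intersection theorem
  obtain ⟨s, f, hf⟩ := Module.Finite.exists_fin' R (↥M ⧸ N)
  haveI : Module.Finite R ((Fin s → R) ⧸ LinearMap.ker f) :=
    Module.Finite.of_surjective (LinearMap.ker f).mkQ (Submodule.mkQ_surjective _)
  let e := f.quotKerEquivOfSurjective hf
  have hx' : ∀ k : ℕ,
      e.symm x ∈ (IsLocalRing.maximalIdeal R ^ k • ⊤ :
        Submodule R ((Fin s → R) ⧸ LinearMap.ker f)) := by
    intro k
    have hmap : Submodule.map (e.symm : (↥M ⧸ N) →ₗ[R] _)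
        (IsLocalRing.maximalIdeal R ^ k • ⊤ : Submodule R (↥M ⧸ N))
        = (IsLocalRing.maximalIdeal R ^ k • ⊤ :
          Submodule R ((Fin s → R) ⧸ LinearMap.ker f)) := by
      rw [Submodule.map_smul'', Submodule.map_top, LinearEquiv.range]
    rw [← hmap]
    exact ⟨x, hx k, rfl⟩
  have hbot := Ideal.iInf_pow_smul_eq_bot_of_isLocalRing
    (I := IsLocalRing.maximalIdeal R) (M := (Fin s → R) ⧸ LinearMap.ker f) hmax
  have he0 : e.symm x = 0 := by
    rw [← Submodule.mem_bot (R := R), ← hbot, Submodule.mem_iInf]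
    exact hx'
  have hx0 : x = 0 := by
    have := congrArg e he0
    simpa using this
  exact (Submodule.Quotient.mk_eq_zero N).mp hx0

end Krull

section Key

variable {R : Type*} [CommRing R] [IsDomain R] [IsDiscreteValuationRing R]
  {A : Type*} [Ring A] [Algebra R A]
  {ι : Type*} [DecidableEq ι] [AddMonoid ι]

lemma GNaux.key (π : R) (hπ : Irreducible π) (𝒜 : ι → Submodule R A) [GradedRing 𝒜]
    (hfg : ∀ m : ι, (𝒜 m).FG)
    (S T : ℕ → Ideal A)
    (hST : ∀ j, ∀ a ∈ S j, ∃ x ∈ T j, ∃ w : A, a = x + π • w)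
    (hTS : ∀ j, T j ≤ S j)
    (hTshift : ∀ j, ∀ x ∈ T (j + 1), π • x ∈ T j)
    (hSshift : ∀ j, ∀ x : A, π • x ∈ S j → x ∈ S (j + 1))
    (hTgr : ∀ j, ∀ a ∈ T j, ∀ m : ι, (DirectSum.decompose 𝒜 a m : A) ∈ T j) :
    ∀ j, ∀ m : ι, ∀ a ∈ S j, a ∈ 𝒜 m → a ∈ T j := by
  have main : ∀ (k j : ℕ) (m : ι) (a : A), a ∈ S j → a ∈ 𝒜 m →
      ∃ b y : A, b ∈ T j ∧ b ∈ 𝒜 m ∧ y ∈ 𝒜 m ∧ a = b + π ^ k • y := by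
    intro k
    induction k with
    | zero =>
      intro j m a haS haM
      exact ⟨0, a, (T j).zero_mem, (𝒜 m).zero_mem, haM, by simp⟩
    | succ k ih =>
      intro j m a haS haM
      obtain ⟨x, hx, w, hw⟩ := hST j a haS
      set xm : A := (DirectSum.decompose 𝒜 x m : A) with hxm_def
      set wm : A := (DirectSum.decompose 𝒜 w m : A) with hwm_def
      have hxm : xm ∈ T j := hTgr j x hx m
      have hxmM : xm ∈ 𝒜 m := SetLike.coe_mem _
      have hwmM : wm ∈ 𝒜 m := SetLike.coe_mem _
      have heq : a = xm + π • wm := by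
        have h1 : (DirectSum.decompose 𝒜 a m : A)
            = (DirectSum.decompose 𝒜 (x + π • w) m : A) := by rw [← hw]
        rw [DirectSum.decompose_of_mem_same 𝒜 haM] at h1
        rw [h1, DirectSum.decompose_add, DirectSum.decompose_smul]
        simp [hxm_def, hwm_def, DirectSum.add_apply, DirectSum.smul_apply]
      have hπwm : π • wm ∈ S j := by
        have h2 : π • wm = a - xm := by rw [heq, add_sub_cancel_left]
        rw [h2]
        exact (S j).sub_mem haS (hTS j hxm)
      have hwm : wm ∈ S (j + 1) := hSshift j wm hπwm
      obtain ⟨b', y, hb'T, hb'M, hyM, hwy⟩ := ih (j + 1) m wm hwm hwmM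
      refine ⟨xm + π • b', y, (T j).add_mem hxm (hTshift j b' hb'T),
        (𝒜 m).add_mem hxmM ((𝒜 m).smul_mem π hb'M), hyM, ?_⟩
      have h3 : π • (π ^ k • y) = π ^ (k + 1) • y := by
        rw [smul_smul, ← pow_succ']
      rw [heq, hwy, smul_add, h3, add_assoc]
  intro j m a haS haM
  exact GNaux.krull_finisher π hπ (𝒜 m) (hfg m) (T j) haM
    (fun k => main k j m a haS haM)

end Key


/-- **Graded Noetherianity from the reduction mod `π`.**  Let `R` be a DVR with
uniformizer `π` and let `𝒜` be a `ℤⁿ`-grading of an `R`-algebra `A` whose graded pieces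
are finitely generated `R`-modules.  If `A/πA` is Noetherian (equivalently, the left
ideals of `A` containing `πA` satisfy the ascending chain condition), then `A` is graded
Noetherian, i.e. ascending chains of graded (homogeneous) left ideals of `A` stabilize. -/
theorem graded_noetherian_of_mod_pi_noetherian
    (R : Type*) [CommRing R] [IsDomain R] [IsDiscreteValuationRing R]
    (π : R) (hπ : Irreducible π)
    (A : Type*) [Ring A] [Algebra R A]
    (n : ℕ) (𝒜 : (Fin n → ℤ) → Submodule R A) [GradedRing 𝒜]
    (hfg : ∀ m : Fin n → ℤ, (𝒜 m).FG)
    (hmod : ∀ c : ℕ →o Ideal A, (∀ k, Ideal.span {algebraMap R A π} ≤ c k) →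
      ∃ N, ∀ k, N ≤ k → c k = c N) :
    ∀ c : ℕ →o Ideal A,
      (∀ k, ∀ a ∈ c k, ∀ m : Fin n → ℤ, (DirectSum.decompose 𝒜 a m : A) ∈ c k) →
      ∃ N, ∀ k, N ≤ k → c k = c N := by
  intro c hc
  classical
  set P : Ideal A := Ideal.span {algebraMap R A π} with hP
  set I : Ideal A := ⨆ k, c k with hI
  have memI : ∀ a : A, a ∈ I ↔ ∃ k, a ∈ c k := fun a => Submodule.mem_iSup_of_chain c a
  have hckI : ∀ k, c k ≤ I := fun k => le_iSup (fun k => (c k : Ideal A)) k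
  have smul_succ : ∀ (i : ℕ) (x : A), π ^ (i + 1) • x = π ^ i • (π • x) := fun i x => by
    rw [smul_smul, ← pow_succ]
  have colon_mono_pow : ∀ (J : Ideal A) (j j' : ℕ), j ≤ j' →
      GNaux.colon J (π ^ j) ≤ GNaux.colon J (π ^ j') := by
    intro J j j' hjj' a ha
    obtain ⟨d, rfl⟩ := Nat.exists_eq_add_of_le hjj'
    rw [GNaux.mem_colon] at ha ⊢
    have h : π ^ d • (π ^ j • a) = π ^ (j + d) • a := by
      rw [smul_smul, ← pow_add, Nat.add_comm]
    rw [← h]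
    exact GNaux.smul_mem_ideal J _ ha
  have colon_mono : ∀ (J J' : Ideal A) (r : R), J ≤ J' →
      GNaux.colon J r ≤ GNaux.colon J' r := fun J J' r h a ha => h ha
  have colon_graded : ∀ (J : Ideal A),
      (∀ a ∈ J, ∀ m : Fin n → ℤ, (DirectSum.decompose 𝒜 a m : A) ∈ J) →
      ∀ (j : ℕ), ∀ a ∈ GNaux.colon J (π ^ j), ∀ m : Fin n → ℤ,
        (DirectSum.decompose 𝒜 a m : A) ∈ GNaux.colon J (π ^ j) := by
    intro J hJ j a ha m
    rw [GNaux.mem_colon] at ha ⊢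
    have h := hJ _ ha m
    rwa [DirectSum.decompose_smul, DirectSum.smul_apply, Submodule.coe_smul] at h
  have hIgr : ∀ a ∈ I, ∀ m : Fin n → ℤ, (DirectSum.decompose 𝒜 a m : A) ∈ I := by
    intro a ha m
    obtain ⟨k, hk⟩ := (memI a).mp ha
    exact (memI _).mpr ⟨k, hc k a hk m⟩
  have sum_mem_of_components : ∀ (J : Ideal A) (a : A),
      (∀ m : Fin n → ℤ, (DirectSum.decompose 𝒜 a m : A) ∈ J) → a ∈ J := by
    intro J a h
    rw [← DirectSum.sum_support_decompose 𝒜 a]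
    exact Ideal.sum_mem _ fun m _ => h m
  have sup_split : ∀ (T' : Ideal A) (a : A), a ∈ T' ⊔ P →
      ∃ x ∈ T', ∃ w : A, a = x + π • w := by
    intro T' a ha
    rw [Submodule.mem_sup] at ha
    obtain ⟨x, hx, z, hz, rfl⟩ := ha
    obtain ⟨w, rfl⟩ := GNaux.mem_span_algebraMap.mp hz
    exact ⟨x, hx, w, rfl⟩
  -- Chain 1 : the saturations `(I : π^j)` modulo `π`
  obtain ⟨j₀, hj₀⟩ := hmod
    ⟨fun j => GNaux.colon I (π ^ j) ⊔ P,
      fun j j' h => sup_le_sup_right (colon_mono_pow I j j' h) P⟩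
    (fun j => le_sup_right)
  -- Application 1 of the key lemma: the saturations stabilize at `j₀`
  have app1 : ∀ j, GNaux.colon I (π ^ (j₀ + j)) ≤ GNaux.colon I (π ^ j₀) := by
    have hkey := GNaux.key π hπ 𝒜 hfg
      (fun j => GNaux.colon I (π ^ (j₀ + j))) (fun _ => GNaux.colon I (π ^ j₀))
      (by
        intro j a ha
        apply sup_split
        have h2 : GNaux.colon I (π ^ (j₀ + j)) ⊔ P = GNaux.colon I (π ^ j₀) ⊔ P :=
          hj₀ (j₀ + j) (Nat.le_add_right j₀ j)
        show a ∈ GNaux.colon I (π ^ j₀) ⊔ P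
        rw [← h2]
        exact Submodule.mem_sup_left ha)
      (fun j => colon_mono_pow I j₀ (j₀ + j) (Nat.le_add_right _ _))
      (fun j x hx => GNaux.smul_mem_ideal _ π hx)
      (by
        intro j x hx
        rw [GNaux.mem_colon] at hx ⊢
        rw [← Nat.add_assoc, smul_succ]
        exact hx)
      (fun j a ha m => colon_graded I hIgr j₀ a ha m)
    intro j a ha
    exact sum_mem_of_components _ a fun m =>
      hkey j m _ (colon_graded I hIgr (j₀ + j) a ha m) (SetLike.coe_mem _)
  have stab1 : GNaux.colon I (π ^ (j₀ + 1)) = GNaux.colon I (π ^ j₀) :=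
    le_antisymm (app1 1) (colon_mono_pow I j₀ (j₀ + 1) (Nat.le_succ j₀))
  -- Chain 2 : the saturations of each `c k` modulo `π`
  have hmod2 : ∀ j : ℕ, ∃ N, ∀ k, N ≤ k →
      (GNaux.colon (c k) (π ^ j) ⊔ P) = (GNaux.colon (c N) (π ^ j) ⊔ P) := by
    intro j
    obtain ⟨N, hN⟩ := hmod
      ⟨fun k => GNaux.colon (c k) (π ^ j) ⊔ P,
        fun k k' h => sup_le_sup_right (colon_mono _ _ _ (c.mono h)) P⟩
      (fun k => le_sup_right)
    exact ⟨N, hN⟩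
  choose Nf hNf using hmod2
  set N := (Finset.range (j₀ + 1)).sup Nf with hNdef
  have hNfN : ∀ j ≤ j₀, Nf j ≤ N := fun j hj =>
    Finset.le_sup (Finset.mem_range.mpr (Nat.lt_succ_of_le hj))
  have star : ∀ j ≤ j₀, ∀ k,
      GNaux.colon (c k) (π ^ j) ≤ GNaux.colon (c N) (π ^ j) ⊔ P := by
    intro j hj k
    calc GNaux.colon (c k) (π ^ j)
        ≤ GNaux.colon (c (max k N)) (π ^ j) := colon_mono _ _ _ (c.mono (le_max_left k N))
      _ ≤ GNaux.colon (c (max k N)) (π ^ j) ⊔ P := le_sup_left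
      _ = GNaux.colon (c (Nf j)) (π ^ j) ⊔ P :=
          hNf j (max k N) ((hNfN j hj).trans (le_max_right k N))
      _ = GNaux.colon (c N) (π ^ j) ⊔ P := (hNf j N (hNfN j hj)).symm
  -- Application 2 of the key lemma
  have hkey2 := GNaux.key π hπ 𝒜 hfg
    (fun j => GNaux.colon I (π ^ min j j₀)) (fun j => GNaux.colon (c N) (π ^ min j j₀))
    (by
      intro j a ha
      apply sup_split
      rw [GNaux.mem_colon] at ha
      obtain ⟨k, hk⟩ := (memI _).mp ha
      exact star (min j j₀) (min_le_right _ _) k (GNaux.mem_colon.mpr hk))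
    (fun j => colon_mono _ _ _ (hckI N))
    (by
      intro j x hx
      have hx0 : x ∈ GNaux.colon (c N) (π ^ min (j + 1) j₀) := hx
      show π • x ∈ GNaux.colon (c N) (π ^ min j j₀)
      rcases le_or_gt j₀ j with h | h
      · have e1 : min (j + 1) j₀ = j₀ := min_eq_right (h.trans (Nat.le_succ j))
        have e2 : min j j₀ = j₀ := min_eq_right h
        rw [e2]
        rw [e1] at hx0
        exact GNaux.smul_mem_ideal _ π hx0
      · have e1 : min (j + 1) j₀ = j + 1 := min_eq_left (Nat.succ_le_of_lt h)
        have e2 : min j j₀ = j := min_eq_left h.le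
        rw [e2]
        rw [e1] at hx0
        rw [GNaux.mem_colon] at hx0 ⊢
        rw [← smul_succ]
        exact hx0)
    (by
      intro j x hx
      have hx0 : π • x ∈ GNaux.colon I (π ^ min j j₀) := hx
      show x ∈ GNaux.colon I (π ^ min (j + 1) j₀)
      have hx' : x ∈ GNaux.colon I (π ^ (min j j₀ + 1)) := by
        rw [GNaux.mem_colon] at hx0 ⊢
        rw [smul_succ]
        exact hx0
      rcases le_or_gt j₀ j with h | h
      · have e1 : min (j + 1) j₀ = j₀ := min_eq_right (h.trans (Nat.le_succ j))
        have e2 : min j j₀ = j₀ := min_eq_right h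
        rw [e1]
        rw [e2] at hx'
        rw [← stab1]
        exact hx'
      · have e1 : min (j + 1) j₀ = j + 1 := min_eq_left (Nat.succ_le_of_lt h)
        have e2 : min j j₀ = j := min_eq_left h.le
        rw [e1]
        rw [e2] at hx'
        exact hx')
    (fun j => colon_graded (c N) (hc N) _)
  -- conclude : `I ≤ c N`
  have hIN : I ≤ c N := by
    intro a ha
    apply sum_mem_of_components
    intro m
    have hmin : min 0 j₀ = 0 := Nat.zero_min j₀
    have h0 : (DirectSum.decompose 𝒜 a m : A) ∈ GNaux.colon I (π ^ min 0 j₀) := by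
      rw [GNaux.mem_colon, hmin, pow_zero, one_smul]
      exact hIgr a ha m
    have h1 := hkey2 0 m _ h0 (SetLike.coe_mem _)
    rw [GNaux.mem_colon, hmin, pow_zero, one_smul] at h1
    exact h1
  exact ⟨N, fun k hk => le_antisymm ((hckI k).trans hIN) (c.mono hk)⟩
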